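/- Take Υ = 0.64, ϑ = 10^{−10} and κ = 1 − 5ϑ in the definition of 𝒱. Then for every real u ≥ 20 and every real v, 1 ≤ 𝒱(u,v) ≤ 1 + e^{−0.35u}. -/

import Mathlib

open Complex Real

/-- The function `𝒱(u,v)` with parameters `Υ` and `κ`; for `u = 0` the last term is
interpreted by its limiting value `2/(Υκ)`. -/
noncomputable def scrV (Υ κ : ℝ) (u v : ℝ) : ℝ :=
  1 + Real.exp (-2 * u) *
      (‖
          ((Complex.exp (((-u : ℂ) + (v : ℂ) * I) * (κ : ℂ)) -
              Complex.exp ((1 - (Υ : ℂ)) * ((-u : ℂ) + (v : ℂ) * I) * (κ : ℂ))) /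
            ((Υ : ℂ) * ((-u : ℂ) + (v : ℂ) * I) * (κ : ℂ)))‖) ^ 2 +
    (if u = 0 then 2 / (Υ * κ)
     else (1 - Real.exp (-2 * u)) * (Real.exp (-u * (1 - Υ) * κ) - Real.exp (-u * κ)) /
        (u * Υ * κ) ^ 2)

set_option maxHeartbeats 1000000 in
lemma scrV_aux (Y κ u v : ℝ) (hY0 : (0:ℝ) < Y) (hY1 : Y < 1) (hκ0 : (0:ℝ) < κ)
    (hd : (0.6:ℝ) ≤ Y * κ) (h35 : (0.35:ℝ) ≤ (1 - Y) * κ) (hu : 20 ≤ u) :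
    1 ≤ scrV Y κ u v ∧ scrV Y κ u v ≤ 1 + Real.exp (-0.35 * u) := by
  have hupos : (0:ℝ) < u := by linarith
  have hu0 : u ≠ 0 := ne_of_gt hupos
  rw [scrV, if_neg hu0]
  set z : ℂ := (-u : ℂ) + (v : ℂ) * I with hz
  have hre1 : (z * (κ:ℂ)).re = -u * κ := by
    simp [hz, Complex.mul_re, Complex.add_re, Complex.mul_im]
  have hre2 : ((1 - (Y:ℂ)) * z * (κ:ℂ)).re = (1 - Y) * (-u) * κ := by
    simp [hz, Complex.mul_re, Complex.add_re, Complex.mul_im, Complex.sub_re, Complex.sub_im]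
  have habsz : u ≤ ‖z‖ := by
    have h := Complex.abs_re_le_norm z
    have hzre : z.re = -u := by simp [hz]
    rw [hzre, abs_neg, abs_of_pos hupos] at h
    exact h
  have hdu : (12:ℝ) ≤ Y * κ * u := by nlinarith
  have habsD : Y * κ * u ≤ ‖(Y:ℂ) * z * (κ:ℂ)‖ := by
    rw [norm_mul, norm_mul, Complex.norm_real, Complex.norm_real, Real.norm_eq_abs, Real.norm_eq_abs,
      abs_of_pos hY0, abs_of_pos hκ0]
    nlinarith
  have hDpos : (0:ℝ) < Y * κ * u := by positivity
  set E : ℝ := Real.exp (-(1 - Y) * u * κ) with hE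
  have hQ : ‖(Complex.exp (z * (κ:ℂ)) - Complex.exp ((1 - (Y:ℂ)) * z * (κ:ℂ))) /
      ((Y:ℂ) * z * (κ:ℂ))‖ ≤ 2 * E / (Y * κ * u) := by
    rw [norm_div]
    apply div_le_div₀ (by positivity) _ hDpos habsD
    calc ‖Complex.exp (z * (κ:ℂ)) - Complex.exp ((1 - (Y:ℂ)) * z * (κ:ℂ))‖
        ≤ ‖Complex.exp (z * (κ:ℂ))‖ + ‖Complex.exp ((1 - (Y:ℂ)) * z * (κ:ℂ))‖ := norm_sub_le _ _
      _ = Real.exp (-u * κ) + Real.exp ((1 - Y) * (-u) * κ) := by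
          rw [Complex.norm_exp, Complex.norm_exp,
            hre1, hre2]
      _ ≤ 2 * E := by
          have h1 : Real.exp (-u * κ) ≤ E := by
            apply Real.exp_le_exp.2; nlinarith
          have h2 : (1 - Y) * (-u) * κ = -(1 - Y) * u * κ := by ring
          rw [h2]; linarith [le_refl E]
  set Q : ℝ := ‖(Complex.exp (z * (κ:ℂ)) - Complex.exp ((1 - (Y:ℂ)) * z * (κ:ℂ))) /
      ((Y:ℂ) * z * (κ:ℂ))‖ with hQdef
  have hQ0 : (0:ℝ) ≤ Q := norm_nonneg _
  -- B term facts
  have hBnum0 : 0 ≤ Real.exp (-u * (1 - Y) * κ) - Real.exp (-u * κ) := by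
    have : Real.exp (-u * κ) ≤ Real.exp (-u * (1 - Y) * κ) := by
      apply Real.exp_le_exp.2; nlinarith
    linarith
  have hexp2u : Real.exp (-2 * u) ≤ 1 := by
    apply Real.exp_le_one_iff.2; linarith
  have hB0 : 0 ≤ (1 - Real.exp (-2 * u)) * (Real.exp (-u * (1 - Y) * κ) - Real.exp (-u * κ)) /
      (u * Y * κ) ^ 2 := by
    apply div_nonneg (mul_nonneg (by linarith) hBnum0) (by positivity)
  clear_value Q E z
  constructor
  · nlinarith [mul_nonneg (le_of_lt (Real.exp_pos (-2*u))) (sq_nonneg Q)]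
  · have hden : (144:ℝ) ≤ (Y * κ * u) ^ 2 := by nlinarith
    have hA : Real.exp (-2 * u) * Q ^ 2 ≤ (1/2) * Real.exp (-0.35 * u) := by
      have hQsq : Q ^ 2 ≤ (2 * E / (Y * κ * u)) ^ 2 := pow_le_pow_left₀ hQ0 hQ 2
      have hEsq : Real.exp (-2 * u) * E ^ 2 ≤ Real.exp (-0.35 * u) := by
        have : Real.exp (-2 * u) * E ^ 2 = Real.exp (-2 * u + (-(1 - Y) * u * κ + -(1 - Y) * u * κ)) := by
          rw [hE, sq, ← Real.exp_add, ← Real.exp_add]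
        rw [this]
        apply Real.exp_le_exp.2
        nlinarith
      have hsqle : (2 * E / (Y * κ * u)) ^ 2 ≤ 4 * E ^ 2 / 144 := by
        rw [div_pow]
        apply div_le_div₀ (by positivity) (by nlinarith [Real.exp_pos (-(1 - Y) * u * κ)]) (by norm_num) hden
      have hE2 : Real.exp (-2 * u) * Q ^ 2 ≤ Real.exp (-2 * u) * (4 * E ^ 2 / 144) := by
        apply mul_le_mul_of_nonneg_left (le_trans hQsq hsqle) (le_of_lt (Real.exp_pos _))
      calc Real.exp (-2 * u) * Q ^ 2 ≤ Real.exp (-2 * u) * (4 * E ^ 2 / 144) := hE2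
        _ = (Real.exp (-2 * u) * E ^ 2) * (4 / 144) := by ring
        _ ≤ Real.exp (-0.35 * u) * (4 / 144) := by
            apply mul_le_mul_of_nonneg_right hEsq (by norm_num)
        _ ≤ (1/2) * Real.exp (-0.35 * u) := by nlinarith [Real.exp_pos (-0.35 * u)]
    have hB : (1 - Real.exp (-2 * u)) * (Real.exp (-u * (1 - Y) * κ) - Real.exp (-u * κ)) /
        (u * Y * κ) ^ 2 ≤ (1/2) * Real.exp (-0.35 * u) := by
      have hnum : (1 - Real.exp (-2 * u)) * (Real.exp (-u * (1 - Y) * κ) - Real.exp (-u * κ))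
          ≤ Real.exp (-0.35 * u) := by
        have h1 : Real.exp (-u * (1 - Y) * κ) ≤ Real.exp (-0.35 * u) := by
          apply Real.exp_le_exp.2; nlinarith
        have h2 : (1 - Real.exp (-2 * u)) * (Real.exp (-u * (1 - Y) * κ) - Real.exp (-u * κ))
            ≤ 1 * (Real.exp (-u * (1 - Y) * κ) - Real.exp (-u * κ)) := by
          apply mul_le_mul_of_nonneg_right _ hBnum0
          linarith [Real.exp_pos (-2 * u)]
        have h3 : Real.exp (-u * (1 - Y) * κ) - Real.exp (-u * κ) ≤ Real.exp (-0.35 * u) := by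
          linarith [Real.exp_pos (-u * κ)]
        linarith
      have hden' : (144:ℝ) ≤ (u * Y * κ) ^ 2 := by nlinarith
      calc (1 - Real.exp (-2 * u)) * (Real.exp (-u * (1 - Y) * κ) - Real.exp (-u * κ)) /
          (u * Y * κ) ^ 2 ≤ Real.exp (-0.35 * u) / 144 := by
            apply div_le_div₀ (Real.exp_nonneg _) hnum (by norm_num) hden'
        _ ≤ (1/2) * Real.exp (-0.35 * u) := by nlinarith [Real.exp_pos (-0.35 * u)]
    linarith
  
theorem scrV_trivial_bound (u v : ℝ) (hu : 20 ≤ u) :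
    1 ≤ scrV 0.64 (1 - 5 * 1e-10) u v ∧
      scrV 0.64 (1 - 5 * 1e-10) u v ≤ 1 + Real.exp (-0.35 * u) := by
  exact scrV_aux 0.64 (1 - 5 * 1e-10) u v (by norm_num) (by norm_num) (by norm_num)
    (by norm_num) (by norm_num) hu
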